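/- arXiv:1111.1825 — 2 statements merged into one kernel-verified Lean document; each statement's English description precedes it below -/
import Mathlib

section
/- Let f be a Kneser function of order d≥1, h(r)=r^s g(r) with s,C∈(0,∞), g non-decreasing and differentiable with lim_{r→0} r·g'(r)/g(r) = 0. If lim_{r→0} f(r)/h(r)=C, then lim_{r→0} f'_+(r)/h'(r) = lim_{r→0} f'_−(r)/h'(r) = C, where h'(r)=s r^{s−1}g(r)+r^s g'(r). -/
open Filter Set Topology

/-- A Kneser function of order `d`. -/
def IsKneser (f : ℝ → ℝ) (d : ℝ) : Prop :=
  (∀ x : ℝ, 0 < x → 0 < f x) ∧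
  ∀ a b lam : ℝ, 0 < a → a ≤ b → 1 ≤ lam →
    f (lam * b) - f (lam * a) ≤ lam ^ d * (f b - f a)


lemma kneser_mono {f : ℝ → ℝ} {d : ℝ} (hd : 1 ≤ d) (hf : IsKneser f d) :
    ∀ ⦃a b : ℝ⦄, 0 < a → a ≤ b → f a ≤ f b := by
  intro a b ha hab
  by_contra hlt
  push_neg at hlt
  have hb : 0 < b := lt_of_lt_of_le ha hab
  set lam := b / a with hlam
  have hlama : lam * a = b := div_mul_cancel₀ b ha.ne'
  have hlam1 : 1 ≤ lam := (one_le_div ha).2 hab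
  have hlampos : 0 < lam := lt_of_lt_of_le one_pos hlam1
  have key : ∀ n : ℕ, f (lam ^ n * b) ≤ f b - n * (f a - f b) := by
    intro n; induction n with
    | zero => simp
    | succ n ih =>
      have hl1 : (1:ℝ) ≤ lam ^ (n+1) := one_le_pow₀ hlam1
      have h1 := hf.2 a b (lam ^ (n+1)) ha hab hl1
      have hrp : (1:ℝ) ≤ (lam ^ (n+1) : ℝ) ^ d :=
        Real.one_le_rpow hl1 (le_trans zero_le_one hd)
      have h2 : (lam ^ (n+1) : ℝ) ^ d * (f b - f a) ≤ f b - f a := by nlinarith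
      have heq : lam ^ (n+1) * a = lam ^ n * b := by
        rw [pow_succ, mul_assoc, hlama]
      have heq2 : lam ^ (n+1) * b = lam * (lam ^ n * b) := by ring
      have := le_trans h1 h2
      rw [heq] at this
      push_cast
      nlinarith
  obtain ⟨n, hn⟩ := exists_nat_gt (f b / (f a - f b))
  have hδ : 0 < f a - f b := sub_pos.2 hlt
  have h3 : f b < n * (f a - f b) := by
    rw [div_lt_iff₀ hδ] at hn; linarith
  have h4 := key n
  have h5 : 0 < f (lam ^ n * b) := hf.1 _ (by positivity)
  linarith

set_option maxHeartbeats 1000000 in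
lemma kneser_cont {f : ℝ → ℝ} {d : ℝ} (hd : 1 ≤ d) (hf : IsKneser f d) {x0 : ℝ} (hx0 : 0 < x0) :
    ContinuousAt f x0 := by
  have mono := kneser_mono hd hf
  rw [Metric.continuousAt_iff]
  intro ε hε
  have h2d : (0:ℝ) < (2:ℝ) ^ d := Real.rpow_pos_of_pos two_pos d
  set ε1 : ℝ := ε / (2 * (2:ℝ) ^ d) with hε1def
  have hε1 : 0 < ε1 := by positivity
  have hne : (Ioo (x0/2) x0).Nonempty := ⟨3*x0/4, by constructor <;> linarith⟩
  have hbdd : BddAbove (f '' Ioo (x0/2) x0) := by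
    refine ⟨f x0, ?_⟩
    rintro _ ⟨z, hz, rfl⟩
    exact mono (lt_trans (by linarith) hz.1) hz.2.le
  set L := sSup (f '' Ioo (x0/2) x0) with hL
  obtain ⟨_, ⟨y, hy, rfl⟩, hfy⟩ :=
    exists_lt_of_lt_csSup (hne.image f) (show L - ε1 < L by linarith)
  have hy0 : 0 < y := lt_trans (by linarith) hy.1
  have hxy1 : 1 < x0 / y := (one_lt_div hy0).2 hy.2
  have hxy2 : x0 / y < 2 := by
    rw [div_lt_iff₀ hy0]; linarith [hy.1]
  set lam := (1 + x0/y)/2 with hlamdef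
  have hlam1 : 1 < lam := by rw [hlamdef]; linarith
  have hlam2 : lam < x0 / y := by rw [hlamdef]; linarith
  have hlamlt2 : lam < 2 := by rw [hlamdef]; linarith
  have hlam0 : 0 < lam := by linarith
  have hyx0 : y < x0 / lam := by
    rw [lt_div_iff₀ hlam0, mul_comm]
    calc lam * y < (x0/y) * y := by exact mul_lt_mul_of_pos_right hlam2 hy0
    _ = x0 := by field_simp
  set b' := (x0/lam + x0)/2 with hb'def
  have hxl_lt : x0 / lam < x0 := div_lt_self hx0 hlam1
  have hxl_gt : x0 / 2 < x0 / lam := by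
    apply div_lt_div_of_pos_left hx0 hlam0 hlamlt2
  have hb'1 : x0 / lam < b' := by rw [hb'def]; linarith
  have hb'2 : b' < x0 := by rw [hb'def]; linarith
  have hb'mem : b' ∈ Ioo (x0/2) x0 := ⟨by linarith, hb'2⟩
  have hfb' : f b' ≤ L := le_csSup hbdd (mem_image_of_mem f hb'mem)
  have hyb' : y ≤ b' := by linarith
  have hK := hf.2 y b' lam hy0 hyb' hlam1.le
  have hlamd : lam ^ d ≤ (2:ℝ) ^ d := Real.rpow_le_rpow hlam0.le hlamlt2.le (by linarith)
  have hfd : f b' - f y ≤ ε1 := by linarith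
  have hfd0 : 0 ≤ f b' - f y := by
    have := mono hy0 hyb'; linarith
  have hbound : f (lam * b') - f (lam * y) ≤ (2:ℝ) ^ d * ε1 := by
    calc f (lam * b') - f (lam * y) ≤ lam ^ d * (f b' - f y) := hK
    _ ≤ (2:ℝ)^d * ε1 := by
        apply mul_le_mul hlamd hfd hfd0 h2d.le
  have h2dε1 : (2:ℝ)^d * ε1 = ε/2 := by
    rw [hε1def]; field_simp
  set a := lam * y with hadef
  set b := lam * b' with hbdef
  have ha0 : 0 < a := by positivity
  have hax0 : a < x0 := by
    rw [hadef]; calc lam * y < (x0/y)*y := mul_lt_mul_of_pos_right hlam2 hy0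
    _ = x0 := by field_simp
  have hbx0 : x0 < b := by
    rw [hbdef]
    calc x0 = lam * (x0/lam) := by field_simp
    _ < lam * b' := by exact mul_lt_mul_of_pos_left hb'1 hlam0
  refine ⟨min (x0 - a) (b - x0), by simp [ha0]; constructor <;> linarith, ?_⟩
  intro x hx
  rw [Real.dist_eq] at hx ⊢
  have hx1 : a < x := by
    have := abs_lt.1 (lt_of_lt_of_le hx (min_le_left _ _)); linarith [this.1]
  have hx2 : x < b := by
    have := abs_lt.1 (lt_of_lt_of_le hx (min_le_right _ _)); linarith [this.2]
  have hfa1 : f a ≤ f x := mono ha0 hx1.le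
  have hfa2 : f a ≤ f x0 := mono ha0 hax0.le
  have hfb1 : f x ≤ f b := mono (lt_trans ha0 hx1) hx2.le
  have hfb2 : f x0 ≤ f b := mono hx0 hbx0.le
  rw [abs_lt]
  constructor <;> nlinarith

lemma kneser_chord {f : ℝ → ℝ} {d : ℝ} (hd : 1 ≤ d) (hf : IsKneser f d)
    {p q : ℝ} (hp : 0 < p) (hpq : p < q) :
    (q - Real.sqrt (p*q)) * f (p ^ d⁻¹) + (Real.sqrt (p*q) - p) * f (q ^ d⁻¹)
      ≤ (q - p) * f ((Real.sqrt (p*q)) ^ d⁻¹) := by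
  have hq : 0 < q := lt_trans hp hpq
  set m := Real.sqrt (p*q) with hmdef
  have hm0 : 0 < m := Real.sqrt_pos.2 (by positivity)
  have hm2 : m * m = p * q := Real.mul_self_sqrt (by positivity)
  have hpm : p < m := by nlinarith
  have hmq : m < q := by nlinarith
  have hd0 : d ≠ 0 := by linarith
  have hinv : 0 ≤ d⁻¹ := by positivity
  have hK := hf.2 (p ^ d⁻¹) (m ^ d⁻¹) ((m/p) ^ d⁻¹)
    (Real.rpow_pos_of_pos hp _)
    (Real.rpow_le_rpow hp.le hpm.le hinv)
    (Real.one_le_rpow ((one_le_div hp).2 hpm.le) hinv)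
  rw [← Real.mul_rpow (by positivity) hp.le, ← Real.mul_rpow (by positivity) hm0.le,
    div_mul_cancel₀ _ hp.ne', Real.rpow_inv_rpow (by positivity) hd0] at hK
  have hq_eq : m / p * m = q := by
    field_simp; nlinarith
  rw [hq_eq] at hK
  have key : p * f (q ^ d⁻¹) + m * f (p ^ d⁻¹) ≤ (p + m) * f (m ^ d⁻¹) := by
    have h0 := mul_le_mul_of_nonneg_left hK hp.le
    have h2 : p * (m / p * (f (m ^ d⁻¹) - f (p ^ d⁻¹))) = m * (f (m ^ d⁻¹) - f (p ^ d⁻¹)) := by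
      field_simp
    nlinarith [h0, h2]
  have e1 : p * (q - m) = (m - p) * m := by nlinarith
  have e2 : p * (q - p) = (m - p) * (m + p) := by nlinarith
  have h1 : p * (q - m) * f (p ^ d⁻¹) = (m - p) * m * f (p ^ d⁻¹) := by rw [e1]
  have h2 : p * (q - p) * f (m ^ d⁻¹) = (m - p) * (m + p) * f (m ^ d⁻¹) := by rw [e2]
  have K' := mul_le_mul_of_nonneg_left key (sub_nonneg.2 hpm.le)
  rw [← mul_le_mul_iff_right₀ hp]
  nlinarith [K', h1, h2]

lemma kneser_F_contAt {f : ℝ → ℝ} {d : ℝ} (hd : 1 ≤ d) (hf : IsKneser f d) {u : ℝ} (hu : 0 < u) :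
    ContinuousAt (fun u : ℝ => f (u ^ d⁻¹)) u := by
  have h1 : ContinuousAt (fun u : ℝ => u ^ d⁻¹) u :=
    Real.continuousAt_rpow_const u d⁻¹ (Or.inl hu.ne')
  exact ContinuousAt.comp (kneser_cont hd hf (Real.rpow_pos_of_pos hu d⁻¹)) h1

lemma kneser_chordal {f : ℝ → ℝ} {d : ℝ} (hd : 1 ≤ d) (hf : IsKneser f d) :
    ∀ x z y : ℝ, 0 < x → x < z → z < y →
      (y - z) * f (x ^ d⁻¹) + (z - x) * f (y ^ d⁻¹) ≤ (y - x) * f (z ^ d⁻¹) := by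
  intro x z0 y hx hxz hzy
  by_contra hcon
  push_neg at hcon
  set F : ℝ → ℝ := fun u => f (u ^ d⁻¹) with hF
  have hy0 : 0 < y := by linarith
  have hyx : (0:ℝ) < y - x := by linarith
  set K : ℝ := (F y - F x) / (y - x) with hK
  have hKey : K * (y - x) = F y - F x := div_mul_cancel₀ _ hyx.ne'
  set φ : ℝ → ℝ := fun t => F t - (F x + K * (t - x)) with hφ
  have hφc : ∀ t : ℝ, 0 < t → ContinuousAt φ t := by
    intro t ht
    exact ((kneser_F_contAt hd hf ht)).sub (by fun_prop)
  have hφx : φ x = 0 := by simp [hφ]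
  have hφy : φ y = 0 := by simp only [hφ]; linarith
  have hφz0 : φ z0 < 0 := by
    simp only [hφ]
    nlinarith
  -- left zero
  set S1 := {t : ℝ | t ∈ Icc x z0 ∧ φ t = 0} with hS1
  have hS1eq : S1 = Icc x z0 ∩ φ ⁻¹' {0} := by ext t; simp [hS1, and_comm]
  have hS1closed : IsClosed S1 := by
    rw [hS1eq]
    refine ContinuousOn.preimage_isClosed_of_isClosed ?_ isClosed_Icc isClosed_singleton
    intro t ht
    exact (hφc t (lt_of_lt_of_le hx ht.1)).continuousWithinAt
  have hS1ne : S1.Nonempty := ⟨x, ⟨le_refl x, hxz.le⟩, hφx⟩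
  have hS1bdd : BddAbove S1 := (bddAbove_Icc).mono (fun t ht => ht.1)
  set u' := sSup S1 with hu'
  have hu'mem : u' ∈ S1 := hS1closed.csSup_mem hS1ne hS1bdd
  have hu'z0 : u' < z0 := lt_of_le_of_ne hu'mem.1.2 (fun h => by rw [h] at hu'mem; linarith [hu'mem.2])
  have hu'x : x ≤ u' := hu'mem.1.1
  have hu'0 : 0 < u' := lt_of_lt_of_le hx hu'x
  have hneg1 : ∀ t : ℝ, u' < t → t ≤ z0 → φ t < 0 := by
    intro t ht1 ht2
    rcases lt_trichotomy (φ t) 0 with h | h | h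
    · exact h
    · exact absurd (le_csSup hS1bdd (⟨⟨le_trans hu'x ht1.le, ht2⟩, h⟩ : t ∈ S1)) (not_le.2 ht1)
    · have hcont : ContinuousOn φ (Icc t z0) := fun w hw =>
        (hφc w (lt_of_lt_of_le (lt_of_lt_of_le hx (le_trans hu'x ht1.le)) hw.1)).continuousWithinAt
      obtain ⟨c, hc, hφc0⟩ := intermediate_value_Icc' ht2 hcont ⟨hφz0.le, h.le⟩
      have hcS1 : c ∈ S1 := ⟨⟨le_trans hu'x (le_trans ht1.le hc.1), hc.2⟩, hφc0⟩
      have := le_csSup hS1bdd hcS1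
      linarith [hc.1]
  -- right zero
  set S2 := {t : ℝ | t ∈ Icc z0 y ∧ φ t = 0} with hS2
  have hS2eq : S2 = Icc z0 y ∩ φ ⁻¹' {0} := by ext t; simp [hS2, and_comm]
  have hS2closed : IsClosed S2 := by
    rw [hS2eq]
    refine ContinuousOn.preimage_isClosed_of_isClosed ?_ isClosed_Icc isClosed_singleton
    intro t ht
    exact (hφc t (lt_of_lt_of_le (lt_trans hx hxz) ht.1)).continuousWithinAt
  have hS2ne : S2.Nonempty := ⟨y, ⟨hzy.le, le_refl y⟩, hφy⟩
  have hS2bdd : BddBelow S2 := (bddBelow_Icc).mono (fun t ht => ht.1)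
  set v' := sInf S2 with hv'
  have hv'mem : v' ∈ S2 := hS2closed.csInf_mem hS2ne hS2bdd
  have hz0v' : z0 < v' :=
    lt_of_le_of_ne hv'mem.1.1 (fun h => by rw [← h] at hv'mem; linarith [hv'mem.2])
  have hv'y : v' ≤ y := hv'mem.1.2
  have hneg2 : ∀ t : ℝ, z0 ≤ t → t < v' → φ t < 0 := by
    intro t ht1 ht2
    rcases lt_trichotomy (φ t) 0 with h | h | h
    · exact h
    · exact absurd (csInf_le hS2bdd (⟨⟨ht1, le_trans ht2.le hv'y⟩, h⟩ : t ∈ S2)) (not_le.2 ht2)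
    · have hcont : ContinuousOn φ (Icc z0 t) := fun w hw =>
        (hφc w (lt_of_lt_of_le (lt_trans hx hxz) hw.1)).continuousWithinAt
      obtain ⟨c, hc, hφc0⟩ := intermediate_value_Icc ht1 hcont ⟨hφz0.le, h.le⟩
      have hcS2 : c ∈ S2 := ⟨⟨hc.1, le_trans hc.2 (le_trans ht2.le hv'y)⟩, hφc0⟩
      have := csInf_le hS2bdd hcS2
      linarith [hc.2]
  -- the geometric midpoint
  have hu'v' : u' < v' := lt_trans hu'z0 hz0v'
  set m0 := Real.sqrt (u' * v') with hm0def
  have hm0nn : 0 ≤ m0 := Real.sqrt_nonneg _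
  have hm2 : m0 * m0 = u' * v' := Real.mul_self_sqrt (le_of_lt (mul_pos hu'0 (lt_trans hu'0 hu'v')))
  have hu'm0 : u' < m0 := by nlinarith
  have hm0v' : m0 < v' := by nlinarith
  have hφm0 : φ m0 < 0 := by
    rcases le_or_gt m0 z0 with h | h
    · exact hneg1 m0 hu'm0 h
    · exact hneg2 m0 h.le hm0v'
  have hφm0' : f (m0 ^ d⁻¹) - (F x + K * (m0 - x)) < 0 := hφm0
  have hFu' : f (u' ^ d⁻¹) = F x + K * (u' - x) := by
    have h := hu'mem.2; simp only [hφ] at h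
    have : F u' = F x + K * (u' - x) := by linarith
    exact this
  have hFv' : f (v' ^ d⁻¹) = F x + K * (v' - x) := by
    have h := hv'mem.2; simp only [hφ] at h
    have : F v' = F x + K * (v' - x) := by linarith
    exact this
  -- chord inequality at (u', v')
  have chord := kneser_chord hd hf hu'0 hu'v'
  rw [← hm0def, hFu', hFv'] at chord
  have hident : (v' - m0) * (F x + K * (u' - x)) + (m0 - u') * (F x + K * (v' - x))
      = (v' - u') * (F x + K * (m0 - x)) := by ring
  rw [hident] at chord
  have key2 : (v' - u') * (f (m0 ^ d⁻¹)) < (v' - u') * (F x + K * (m0 - x)) := by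
    have := mul_lt_mul_of_pos_left (show f (m0 ^ d⁻¹) < F x + K * (m0 - x) by linarith)
      (show (0:ℝ) < v' - u' by linarith)
    linarith
  linarith

lemma kneser_concaveOn {f : ℝ → ℝ} {d : ℝ} (hd : 1 ≤ d) (hf : IsKneser f d) :
    ConcaveOn ℝ (Ioi 0) (fun u : ℝ => f (u ^ d⁻¹)) := by
  apply concaveOn_of_slope_anti_adjacent (convex_Ioi 0)
  intro x y z hx hz hxy hyz
  have h := kneser_chordal hd hf x y z hx hxy hyz
  rw [div_le_div_iff₀ (by linarith) (by linarith)]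
  nlinarith [h]

lemma kneser_deriv_bounds {f : ℝ → ℝ} {d : ℝ} (hd : 1 ≤ d) (hf : IsKneser f d)
    {t r w : ℝ} (ht : 0 < t) (htr : t < r) (hrw : r < w) :
    ((f w - f r) / (w ^ d - r ^ d) * (d * r ^ (d-1)) ≤ derivWithin f (Ioi r) r ∧
      derivWithin f (Ioi r) r ≤ (f r - f t) / (r ^ d - t ^ d) * (d * r ^ (d-1))) ∧
    ((f w - f r) / (w ^ d - r ^ d) * (d * r ^ (d-1)) ≤ derivWithin f (Iio r) r ∧
      derivWithin f (Iio r) r ≤ (f r - f t) / (r ^ d - t ^ d) * (d * r ^ (d-1))) := by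
  have hr : 0 < r := lt_trans ht htr
  have hw : 0 < w := lt_trans hr hrw
  have hd0 : d ≠ 0 := by linarith
  have hdpos : 0 < d := by linarith
  set F : ℝ → ℝ := fun u => f (u ^ d⁻¹) with hFdef
  set u := r ^ d with hudef
  have hu : 0 < u := Real.rpow_pos_of_pos hr d
  have htd : t ^ d < u := Real.rpow_lt_rpow ht.le htr hdpos
  have htd0 : 0 < t ^ d := Real.rpow_pos_of_pos ht d
  have hwd : u < w ^ d := Real.rpow_lt_rpow hr.le hrw hdpos
  have hanti : AntitoneOn (slope F u) (Ioi 0 \ {u}) :=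
    (kneser_concaveOn hd hf).slope_anti (mem_Ioi.2 hu)
  have hmem : ∀ v : ℝ, 0 < v → v ≠ u → v ∈ Ioi (0:ℝ) \ {u} := fun v h1 h2 => ⟨mem_Ioi.2 h1, h2⟩
  have hFr : F u = f r := by rw [hFdef]; simp only; rw [hudef, Real.rpow_rpow_inv hr.le hd0]
  have hFw : F (w ^ d) = f w := by rw [hFdef]; simp only; rw [Real.rpow_rpow_inv hw.le hd0]
  have hFt : F (t ^ d) = f t := by rw [hFdef]; simp only; rw [Real.rpow_rpow_inv ht.le hd0]
  have hslope_w : slope F u (w ^ d) = (f w - f r) / (w ^ d - r ^ d) := by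
    rw [slope_def_field, hFw, hFr, hudef]
  have hslope_t : slope F u (t ^ d) = (f r - f t) / (r ^ d - t ^ d) := by
    rw [slope_comm, slope_def_field, hFt, hFr, hudef]
  have hpow : HasDerivAt (fun x : ℝ => x ^ d) (d * r ^ (d-1)) r :=
    Real.hasDerivAt_rpow_const (Or.inl hr.ne')
  have hfactor : 0 < d * r ^ (d-1) := by
    have := Real.rpow_pos_of_pos hr (d-1); positivity
  -- RIGHT
  have hneR : (Ioo u (u+1)).Nonempty := ⟨u + 1/2, by constructor <;> simp <;> linarith⟩
  have hantiR : AntitoneOn (slope F u) (Ioo u (u+1)) :=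
    hanti.mono (fun v hv => hmem v (lt_trans hu hv.1) (ne_of_gt hv.1))
  have hbddR : BddAbove (slope F u '' Ioo u (u+1)) := by
    refine ⟨slope F u (t ^ d), ?_⟩
    rintro _ ⟨v, hv, rfl⟩
    exact hanti (hmem _ htd0 (ne_of_lt htd)) (hmem v (lt_trans hu hv.1) (ne_of_gt hv.1))
      (le_trans htd.le hv.1.le)
  set RD := sSup (slope F u '' Ioo u (u+1)) with hRD
  have htendR : Tendsto (slope F u) (𝓝[>] u) (𝓝 RD) :=
    AntitoneOn.tendsto_nhdsWithin_Ioo_right hneR hantiR hbddR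
  have hDFR : HasDerivWithinAt F RD (Ioi u) u :=
    (hasDerivWithinAt_iff_tendsto_slope' (fun h => lt_irrefl u h)).2 htendR
  have hmapsR : MapsTo (fun x : ℝ => x ^ d) (Ioi r) (Ioi u) := fun y hy =>
    mem_Ioi.2 (Real.rpow_lt_rpow hr.le (mem_Ioi.1 hy) hdpos)
  have hcompR : HasDerivWithinAt (F ∘ fun x : ℝ => x ^ d) (RD * (d * r ^ (d-1))) (Ioi r) r :=
    hDFR.comp r hpow.hasDerivWithinAt hmapsR
  have hcongrR : HasDerivWithinAt f (RD * (d * r ^ (d-1))) (Ioi r) r := by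
    refine hcompR.congr (fun y hy => ?_) ?_
    · show f y = F (y ^ d)
      rw [hFdef]; simp only; rw [Real.rpow_rpow_inv (le_of_lt (lt_trans hr (mem_Ioi.1 hy))) hd0]
    · show f r = F (r ^ d)
      rw [← hudef, hFr]
  have hderivR : derivWithin f (Ioi r) r = RD * (d * r ^ (d-1)) :=
    hcongrR.derivWithin (uniqueDiffWithinAt_Ioi r)
  have hRD_le : RD ≤ slope F u (t ^ d) := by
    refine csSup_le (hneR.image _) ?_
    rintro _ ⟨v, hv, rfl⟩
    exact hanti (hmem _ htd0 (ne_of_lt htd)) (hmem v (lt_trans hu hv.1) (ne_of_gt hv.1))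
      (le_trans htd.le hv.1.le)
  have hRD_ge : slope F u (w ^ d) ≤ RD := by
    set v0 := (u + min (u+1) (w ^ d)) / 2 with hv0
    have hminu : u < min (u+1) (w ^ d) := lt_min (by linarith) hwd
    have hv01 : u < v0 := by rw [hv0]; linarith
    have hv02 : v0 < u + 1 := by
      have : min (u+1) (w ^ d) ≤ u + 1 := min_le_left _ _
      rw [hv0]; linarith
    have hv03 : v0 ≤ w ^ d := by
      have : min (u+1) (w ^ d) ≤ w ^ d := min_le_right _ _
      rw [hv0]; linarith
    calc slope F u (w ^ d) ≤ slope F u v0 :=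
          hanti (hmem v0 (lt_trans hu hv01) (ne_of_gt hv01))
            (hmem _ (lt_trans hu hwd) (ne_of_gt hwd)) hv03
    _ ≤ RD := le_csSup hbddR (mem_image_of_mem _ ⟨hv01, hv02⟩)
  -- LEFT
  have hneL : (Ioo (0:ℝ) u).Nonempty := ⟨u/2, by constructor <;> linarith⟩
  have hantiL : AntitoneOn (slope F u) (Ioo 0 u) :=
    hanti.mono (fun v hv => hmem v hv.1 (ne_of_lt hv.2))
  have hbddL : BddBelow (slope F u '' Ioo 0 u) := by
    refine ⟨slope F u (w ^ d), ?_⟩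
    rintro _ ⟨v, hv, rfl⟩
    exact hanti (hmem v hv.1 (ne_of_lt hv.2)) (hmem _ (lt_trans hu hwd) (ne_of_gt hwd))
      (le_trans hv.2.le hwd.le)
  set LD := sInf (slope F u '' Ioo 0 u) with hLD
  have htendL : Tendsto (slope F u) (𝓝[<] u) (𝓝 LD) :=
    AntitoneOn.tendsto_nhdsWithin_Ioo_left hneL hantiL hbddL
  have hDFL : HasDerivWithinAt F LD (Iio u) u :=
    (hasDerivWithinAt_iff_tendsto_slope' (s := Iio u) (f := F) (f' := LD) (by simp)).2 htendL
  have hmapsL : MapsTo (fun x : ℝ => x ^ d) (Ioo 0 r) (Iio u) := fun y hy =>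
    mem_Iio.2 (Real.rpow_lt_rpow (le_of_lt hy.1) hy.2 hdpos)
  have hcompL : HasDerivWithinAt (F ∘ fun x : ℝ => x ^ d) (LD * (d * r ^ (d-1))) (Ioo 0 r) r :=
    hDFL.comp r (hpow.hasDerivWithinAt) hmapsL
  have hcongrL : HasDerivWithinAt f (LD * (d * r ^ (d-1))) (Ioo 0 r) r := by
    refine hcompL.congr (fun y hy => ?_) ?_
    · show f y = F (y ^ d)
      rw [hFdef]; simp only; rw [Real.rpow_rpow_inv (le_of_lt hy.1) hd0]
    · show f r = F (r ^ d)
      rw [← hudef, hFr]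
  have hIooIio : Ioo (0:ℝ) r ∈ 𝓝[<] r := Ioo_mem_nhdsLT hr
  have hderivL : derivWithin f (Iio r) r = LD * (d * r ^ (d-1)) :=
    (hcongrL.mono_of_mem_nhdsWithin hIooIio).derivWithin (uniqueDiffWithinAt_Iio r)
  have hLD_le : LD ≤ slope F u (t ^ d) :=
    csInf_le hbddL (mem_image_of_mem _ ⟨htd0, htd⟩)
  have hLD_ge : slope F u (w ^ d) ≤ LD := by
    refine le_csInf (hneL.image _) ?_
    rintro _ ⟨v, hv, rfl⟩
    exact hanti (hmem v hv.1 (ne_of_lt hv.2)) (hmem _ (lt_trans hu hwd) (ne_of_gt hwd))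
      (le_trans hv.2.le hwd.le)
  rw [hderivR, hderivL, ← hslope_w, ← hslope_t]
  exact ⟨⟨mul_le_mul_of_nonneg_right hRD_ge hfactor.le,
      mul_le_mul_of_nonneg_right hRD_le hfactor.le⟩,
    ⟨mul_le_mul_of_nonneg_right hLD_ge hfactor.le,
      mul_le_mul_of_nonneg_right hLD_le hfactor.le⟩⟩

lemma slow_ratio {g : ℝ → ℝ} (hg_pos : ∀ r : ℝ, 0 < r → 0 < g r)
    (hg_diff : ∀ r : ℝ, 0 < r → DifferentiableAt ℝ g r)
    (hg_slow : Tendsto (fun r : ℝ => r * deriv g r / g r) (𝓝[>] (0:ℝ)) (𝓝 0))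
    {κ : ℝ} (hκ : 1 < κ) :
    Tendsto (fun r : ℝ => g (κ * r) / g r) (𝓝[>] (0:ℝ)) (𝓝 1) := by
  have hκ0 : 0 < κ := by linarith
  set ψ : ℝ → ℝ := fun t => Real.log (g t) with hψ
  have hψd : ∀ t : ℝ, 0 < t → HasDerivAt ψ (deriv g t / g t) t := by
    intro t ht
    have h1 := (Real.hasDerivAt_log (hg_pos t ht).ne').comp t (hg_diff t ht).hasDerivAt
    convert h1 using 1 <;> try rfl
    rw [div_eq_inv_mul]
  have hmvt : ∀ r : ℝ, 0 < r → ∃ c ∈ Ioo r (κ * r),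
      deriv g c / g c = (ψ (κ * r) - ψ r) / (κ * r - r) := by
    intro r hr
    have hab : r < κ * r := by nlinarith
    refine exists_hasDerivAt_eq_slope ψ _ hab ?_ ?_
    · intro x hx
      exact ((hψd x (lt_of_lt_of_le hr hx.1)).continuousAt).continuousWithinAt
    · intro x hx
      exact hψd x (lt_trans hr hx.1)
  have hdiff0 : Tendsto (fun r : ℝ => ψ (κ * r) - ψ r) (𝓝[>] (0:ℝ)) (𝓝 0) := by
    rw [Metric.tendsto_nhdsWithin_nhds]
    intro ε hε
    rw [Metric.tendsto_nhdsWithin_nhds] at hg_slow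
    have hκ1 : (0:ℝ) < κ - 1 := by linarith
    obtain ⟨δ, hδ, hδ'⟩ := hg_slow (ε / (2 * (κ - 1))) (by positivity)
    refine ⟨δ / κ, by positivity, ?_⟩
    intro r hr hrδ
    obtain ⟨c, hc, hceq⟩ := hmvt r hr
    rw [mem_Ioi] at hr
    rw [Real.dist_eq, sub_zero] at hrδ ⊢
    rw [abs_of_pos hr] at hrδ
    have hc0 : 0 < c := lt_trans hr hc.1
    have hcδ : c < δ := by
      have : κ * r < δ := by
        rw [lt_div_iff₀ hκ0] at hrδ; linarith [hrδ]
      linarith [hc.2]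
    have hE := hδ' (mem_Ioi.2 hc0) (by rw [Real.dist_eq, sub_zero, abs_of_pos hc0]; exact hcδ)
    rw [Real.dist_eq, sub_zero] at hE
    have heq : ψ (κ * r) - ψ r = (κ * r - r) * (deriv g c / g c) := by
      have hne : κ * r - r ≠ 0 := ne_of_gt (by nlinarith)
      rw [hceq, mul_div_assoc', mul_div_cancel_left₀ _ hne]
    rw [heq, abs_mul]
    have h1 : |κ * r - r| = (κ - 1) * r := by
      rw [abs_of_pos (by nlinarith)]; ring
    have h2 : |deriv g c / g c| ≤ |c * deriv g c / g c| / r := by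
      rw [mul_div_assoc, abs_mul, abs_of_pos hc0]
      rw [le_div_iff₀ hr]
      have : r * |deriv g c / g c| ≤ c * |deriv g c / g c| := by
        apply mul_le_mul_of_nonneg_right (le_of_lt hc.1) (abs_nonneg _)
      linarith
    calc |κ * r - r| * |deriv g c / g c| ≤ ((κ - 1) * r) * (|c * deriv g c / g c| / r) := by
          rw [h1]
          apply mul_le_mul_of_nonneg_left h2 (by nlinarith)
    _ = (κ - 1) * |c * deriv g c / g c| := by field_simp
    _ < (κ - 1) * (ε / (2 * (κ - 1))) := by
          apply mul_lt_mul_of_pos_left hE (by linarith)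
    _ < ε := by
          rw [mul_div_assoc']
          rw [div_lt_iff₀ (by linarith : (0:ℝ) < 2 * (κ - 1))]
          nlinarith
  have hexp : Tendsto (fun r : ℝ => Real.exp (ψ (κ * r) - ψ r)) (𝓝[>] (0:ℝ)) (𝓝 1) := by
    have := (Real.continuous_exp.tendsto (0:ℝ)).comp hdiff0
    rwa [Real.exp_zero] at this
  refine hexp.congr' ?_
  filter_upwards [self_mem_nhdsWithin] with r hr
  rw [mem_Ioi] at hr
  rw [hψ]
  simp only
  rw [← Real.log_div (hg_pos _ (by nlinarith)).ne' (hg_pos _ hr).ne',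
    Real.exp_log (div_pos (hg_pos _ (by nlinarith)) (hg_pos _ hr))]

-- limit of slope of rpow at 1
lemma rpow_slope_tendsto {p : ℝ} :
    Tendsto (fun κ : ℝ => (κ ^ p - 1) / (κ - 1)) (𝓝[>] (1:ℝ)) (𝓝 p) := by
  have h : HasDerivAt (fun x : ℝ => x ^ p) (p * (1:ℝ) ^ (p-1)) 1 :=
    Real.hasDerivAt_rpow_const (Or.inl one_ne_zero)
  rw [Real.one_rpow, mul_one] at h
  have h2 := hasDerivAt_iff_tendsto_slope.1 h
  have h3 : Tendsto (slope (fun x : ℝ => x ^ p) 1) (𝓝[>] (1:ℝ)) (𝓝 p) :=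
    h2.mono_left (nhdsWithin_mono 1 (fun x hx => ne_of_gt hx))
  refine h3.congr' ?_
  filter_upwards [self_mem_nhdsWithin] with κ hκ
  rw [slope_def_field, Real.one_rpow]

-- tendsto of rpow at 1 within
lemma rpow_tendsto_one {p : ℝ} :
    Tendsto (fun κ : ℝ => κ ^ p) (𝓝[>] (1:ℝ)) (𝓝 1) := by
  have h : ContinuousAt (fun x : ℝ => x ^ p) 1 :=
    Real.continuousAt_rpow_const 1 p (Or.inl one_ne_zero)
  have := h.tendsto.mono_left (nhdsWithin_le_nhds (s := Ioi (1:ℝ)))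
  rwa [Real.one_rpow] at this

lemma lfun_tendsto {d s C : ℝ} (hd : 1 ≤ d) (hs : 0 < s) :
    Tendsto (fun κ : ℝ => C * d * (κ ^ s - 1) / (s * (κ ^ d - 1))) (𝓝[>] (1:ℝ)) (𝓝 C) := by
  have hd0 : (0:ℝ) < d := by linarith
  have h1 : Tendsto (fun κ : ℝ => (C * d / s) * ((κ ^ s - 1)/(κ - 1)) / ((κ ^ d - 1)/(κ - 1)))
      (𝓝[>] (1:ℝ)) (𝓝 ((C * d / s) * s / d)) :=
    ((rpow_slope_tendsto (p := s)).const_mul _).div (rpow_slope_tendsto (p := d)) hd0.ne'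
  have h2 : (C * d / s) * s / d = C := by field_simp
  rw [h2] at h1
  refine h1.congr' ?_
  filter_upwards [self_mem_nhdsWithin] with κ hκ
  rw [mem_Ioi] at hκ
  have hκ0 : (0:ℝ) < κ := by linarith
  have hκ1 : κ - 1 ≠ 0 := ne_of_gt (by linarith)
  have hκd : κ ^ d - 1 ≠ 0 := by
    have : 1 < κ ^ d := Real.one_lt_rpow_iff_of_pos hκ0 |>.2 (Or.inl ⟨hκ, hd0⟩)
    · linarith
  field_simp

lemma ufun_tendsto {d s C : ℝ} (hd : 1 ≤ d) (hs : 0 < s) :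
    Tendsto (fun κ : ℝ => C * d * (κ ^ s - 1) / (s * (κ ^ d - 1)) * (κ ^ d / κ ^ s))
      (𝓝[>] (1:ℝ)) (𝓝 C) := by
  have h := (lfun_tendsto (d := d) (s := s) (C := C) hd hs).mul
    ((rpow_tendsto_one (p := d)).div (rpow_tendsto_one (p := s)) one_ne_zero)
  simpa using h

set_option maxHeartbeats 2000000 in
lemma kneser_main_aux (f g : ℝ → ℝ) (d s C : ℝ) (hd : 1 ≤ d) (hs : 0 < s) (hC : 0 < C)
    (hg_pos : ∀ r : ℝ, 0 < r → 0 < g r)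
    (hg_diff : ∀ r : ℝ, 0 < r → DifferentiableAt ℝ g r)
    (hg_slow : Tendsto (fun r : ℝ => r * deriv g r / g r) (𝓝[>] (0:ℝ)) (𝓝 0))
    (hlim : Tendsto (fun r : ℝ => f r / (r ^ s * g r)) (𝓝[>] (0:ℝ)) (𝓝 C))
    (D : ℝ → ℝ)
    (hD : ∀ t r w : ℝ, 0 < t → t < r → r < w →
      (f w - f r) / (w ^ d - r ^ d) * (d * r ^ (d-1)) ≤ D r ∧
      D r ≤ (f r - f t) / (r ^ d - t ^ d) * (d * r ^ (d-1))) :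
    Tendsto (fun r : ℝ => D r / (s * r ^ (s - 1) * g r + r ^ s * deriv g r))
      (𝓝[>] (0:ℝ)) (𝓝 C) := by
  have hdpos : (0:ℝ) < d := by linarith
  rw [Metric.tendsto_nhds]
  intro ε hε
  have hev : ∀ᶠ κ in 𝓝[>] (1:ℝ), 1 < κ ∧
      C - ε/2 < C * d * (κ ^ s - 1) / (s * (κ ^ d - 1)) ∧
      C * d * (κ ^ s - 1) / (s * (κ ^ d - 1)) * (κ ^ d / κ ^ s) < C + ε/2 := by
    filter_upwards [self_mem_nhdsWithin,
      (lfun_tendsto hd hs).eventually (eventually_gt_nhds (by linarith : C - ε/2 < C)),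
      (ufun_tendsto hd hs).eventually (eventually_lt_nhds (by linarith : C < C + ε/2))]
      with κ h1 h2 h3
    exact ⟨h1, h2, h3⟩
  obtain ⟨κ, hκ1, hκL, hκU⟩ := hev.exists
  have hκ0 : (0:ℝ) < κ := by linarith
  have hκdgt : 1 < κ ^ d := Real.one_lt_rpow_iff_of_pos hκ0 |>.2 (Or.inl ⟨hκ1, hdpos⟩)
  have hκsgt : 1 < κ ^ s := Real.one_lt_rpow_iff_of_pos hκ0 |>.2 (Or.inl ⟨hκ1, hs⟩)
  -- maps
  have hmulmap : Tendsto (fun r : ℝ => κ * r) (𝓝[>] (0:ℝ)) (𝓝[>] (0:ℝ)) := by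
    apply tendsto_nhdsWithin_of_tendsto_nhds_of_eventually_within
    · have h : Tendsto (fun r : ℝ => κ * r) (𝓝 (0:ℝ)) (𝓝 (κ * 0)) :=
        (continuous_const.mul continuous_id).tendsto (0:ℝ)
      rw [mul_zero] at h
      exact h.mono_left nhdsWithin_le_nhds
    · filter_upwards [self_mem_nhdsWithin] with r hr
      exact mem_Ioi.2 (by nlinarith [mem_Ioi.1 hr])
  have hdivmap : Tendsto (fun r : ℝ => r / κ) (𝓝[>] (0:ℝ)) (𝓝[>] (0:ℝ)) := by
    apply tendsto_nhdsWithin_of_tendsto_nhds_of_eventually_within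
    · have h : Tendsto (fun r : ℝ => r / κ) (𝓝 (0:ℝ)) (𝓝 ((0:ℝ) / κ)) :=
        (continuous_id.div_const κ).tendsto (0:ℝ)
      rw [zero_div] at h
      exact h.mono_left nhdsWithin_le_nhds
    · filter_upwards [self_mem_nhdsWithin] with r hr
      exact mem_Ioi.2 (div_pos (mem_Ioi.1 hr) hκ0)
  have hT1 : Tendsto (fun r : ℝ => f (κ * r) / ((κ * r) ^ s * g (κ * r))) (𝓝[>] (0:ℝ)) (𝓝 C) :=
    hlim.comp hmulmap
  have hT2 : Tendsto (fun r : ℝ => f (r / κ) / ((r / κ) ^ s * g (r / κ))) (𝓝[>] (0:ℝ)) (𝓝 C) :=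
    hlim.comp hdivmap
  have hRat1 : Tendsto (fun r : ℝ => g (κ * r) / g r) (𝓝[>] (0:ℝ)) (𝓝 1) :=
    slow_ratio hg_pos hg_diff hg_slow hκ1
  have hRat2 : Tendsto (fun r : ℝ => g (r / κ) / g r) (𝓝[>] (0:ℝ)) (𝓝 1) := by
    have ha : Tendsto (fun r : ℝ => g (κ * (r / κ)) / g (r / κ)) (𝓝[>] (0:ℝ)) (𝓝 1) :=
      hRat1.comp hdivmap
    have hb := ha.inv₀ one_ne_zero
    rw [inv_one] at hb
    refine hb.congr' ?_
    filter_upwards [self_mem_nhdsWithin] with r hr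
    rw [mem_Ioi] at hr
    have : κ * (r / κ) = r := by field_simp
    rw [this, inv_div]
  have hEsmall : ∀ᶠ r in 𝓝[>] (0:ℝ), |r * deriv g r / g r| < s / 2 := by
    have h := Metric.tendsto_nhds.1 hg_slow (s/2) (by positivity)
    simpa only [Real.dist_eq, sub_zero] using h
  -- the two bound-function limits
  have hBL : Tendsto (fun r : ℝ => (f (κ * r) - f r) / ((κ * r) ^ d - r ^ d) * (d * r ^ (d-1)) /
      (s * r ^ (s - 1) * g r + r ^ s * deriv g r)) (𝓝[>] (0:ℝ))
      (𝓝 (C * d * (κ ^ s - 1) / (s * (κ ^ d - 1)))) := by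
    have hκd1 : κ ^ d - 1 ≠ 0 := ne_of_gt (by linarith)
    have hκs0 : κ ^ s ≠ 0 := (Real.rpow_pos_of_pos hκ0 s).ne'
    have hmodel : Tendsto (fun r : ℝ =>
        (d / (κ ^ d - 1)) * ((f (κ * r) / ((κ * r) ^ s * g (κ * r)) * (κ ^ s * (g (κ * r) / g r))
          - f r / (r ^ s * g r)) / (s + r * deriv g r / g r)))
        (𝓝[>] (0:ℝ))
        (𝓝 ((d / (κ ^ d - 1)) * ((C * (κ ^ s * 1) - C) / (s + 0)))) :=
      ((((hT1.mul ((hRat1.const_mul (κ ^ s)))).sub hlim).div (hg_slow.const_add s)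
        (by simpa using hs.ne')).const_mul _)
    have hval : (d / (κ ^ d - 1)) * ((C * (κ ^ s * 1) - C) / (s + 0))
        = C * d * (κ ^ s - 1) / (s * (κ ^ d - 1)) := by
      field_simp
      ring
    rw [hval] at hmodel
    refine hmodel.congr' ?_
    filter_upwards [self_mem_nhdsWithin, hEsmall] with r hr hEr
    rw [mem_Ioi] at hr
    have hgr : (0:ℝ) < g r := hg_pos r hr
    have hgκ : (0:ℝ) < g (κ * r) := hg_pos _ (by nlinarith)
    have hrs : (0:ℝ) < r ^ s := Real.rpow_pos_of_pos hr s
    have hrd : (0:ℝ) < r ^ d := Real.rpow_pos_of_pos hr d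
    have hsE : (0:ℝ) < s + r * deriv g r / g r := by
      have := abs_lt.1 hEr; linarith [this.1]
    have e1 : (κ * r) ^ s = κ ^ s * r ^ s := Real.mul_rpow hκ0.le hr.le
    have e2 : (κ * r) ^ d = κ ^ d * r ^ d := Real.mul_rpow hκ0.le hr.le
    have e3 : r ^ (s - 1) = r ^ s / r := by rw [Real.rpow_sub hr, Real.rpow_one]
    have e4 : r ^ (d - 1) = r ^ d / r := by rw [Real.rpow_sub hr, Real.rpow_one]
    have hHpos' : (0:ℝ) < s * (r ^ s / r) * g r + r ^ s * deriv g r := by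
      have hid : s * (r ^ s / r) * g r + r ^ s * deriv g r
          = (r ^ s * g r / r) * (s + r * deriv g r / g r) := by
        field_simp
      rw [hid]
      exact mul_pos (by positivity) hsE
    have hden : κ ^ d * r ^ d - r ^ d ≠ 0 := ne_of_gt (by nlinarith)
    have hHid : s * (r ^ s / r) * g r + r ^ s * deriv g r
        = (r ^ s * g r / r) * (s + r * deriv g r / g r) := by
      field_simp
    rw [e1, e2, e3, e4, hHid]
    conv_lhs => rw [mul_div_assoc']
    conv_rhs => rw [← div_div]
    congr 1
    field_simp [hκd1, hκs0, hgr.ne', hgκ.ne', hrs.ne', hrd.ne', hr.ne', hden]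
  have hBU : Tendsto (fun r : ℝ => (f r - f (r / κ)) / (r ^ d - (r / κ) ^ d) * (d * r ^ (d-1)) /
      (s * r ^ (s - 1) * g r + r ^ s * deriv g r)) (𝓝[>] (0:ℝ))
      (𝓝 (C * d * (κ ^ s - 1) / (s * (κ ^ d - 1)) * (κ ^ d / κ ^ s))) := by
    have hκd1 : κ ^ d - 1 ≠ 0 := ne_of_gt (by linarith)
    have hκs0 : κ ^ s ≠ 0 := (Real.rpow_pos_of_pos hκ0 s).ne'
    have hκd0 : κ ^ d ≠ 0 := (Real.rpow_pos_of_pos hκ0 d).ne'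
    have hmodel : Tendsto (fun r : ℝ =>
        (d * (κ ^ d / (κ ^ d - 1))) * ((f r / (r ^ s * g r)
          - f (r / κ) / ((r / κ) ^ s * g (r / κ)) * ((κ ^ s)⁻¹ * (g (r / κ) / g r)))
          / (s + r * deriv g r / g r)))
        (𝓝[>] (0:ℝ))
        (𝓝 ((d * (κ ^ d / (κ ^ d - 1))) * ((C - C * ((κ ^ s)⁻¹ * 1)) / (s + 0)))) :=
      (((hlim.sub (hT2.mul ((hRat2.const_mul (κ ^ s)⁻¹)))).div (hg_slow.const_add s)
        (by simpa using hs.ne')).const_mul _)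
    have hval : (d * (κ ^ d / (κ ^ d - 1))) * ((C - C * ((κ ^ s)⁻¹ * 1)) / (s + 0))
        = C * d * (κ ^ s - 1) / (s * (κ ^ d - 1)) * (κ ^ d / κ ^ s) := by
      field_simp
      ring
    rw [hval] at hmodel
    refine hmodel.congr' ?_
    filter_upwards [self_mem_nhdsWithin, hEsmall] with r hr hEr
    rw [mem_Ioi] at hr
    have hgr : (0:ℝ) < g r := hg_pos r hr
    have hgκ : (0:ℝ) < g (r / κ) := hg_pos _ (by positivity)
    have hrs : (0:ℝ) < r ^ s := Real.rpow_pos_of_pos hr s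
    have hrd : (0:ℝ) < r ^ d := Real.rpow_pos_of_pos hr d
    have hsE : (0:ℝ) < s + r * deriv g r / g r := by
      have := abs_lt.1 hEr; linarith [this.1]
    have e1 : (r / κ) ^ s = r ^ s / κ ^ s := Real.div_rpow hr.le hκ0.le _
    have e2 : (r / κ) ^ d = r ^ d / κ ^ d := Real.div_rpow hr.le hκ0.le _
    have e3 : r ^ (s - 1) = r ^ s / r := by rw [Real.rpow_sub hr, Real.rpow_one]
    have e4 : r ^ (d - 1) = r ^ d / r := by rw [Real.rpow_sub hr, Real.rpow_one]
    have hHpos' : (0:ℝ) < s * (r ^ s / r) * g r + r ^ s * deriv g r := by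
      have hid : s * (r ^ s / r) * g r + r ^ s * deriv g r
          = (r ^ s * g r / r) * (s + r * deriv g r / g r) := by
        field_simp
      rw [hid]
      exact mul_pos (by positivity) hsE
    have hden : r ^ d - r ^ d / κ ^ d ≠ 0 := by
      have h1 : r ^ d / κ ^ d < r ^ d := by
        rw [div_lt_iff₀ (Real.rpow_pos_of_pos hκ0 d)]
        nlinarith
      exact ne_of_gt (by linarith)
    have hHid : s * (r ^ s / r) * g r + r ^ s * deriv g r
        = (r ^ s * g r / r) * (s + r * deriv g r / g r) := by
      field_simp
    have e5 : r ^ d - r ^ d / κ ^ d = r ^ d * (κ ^ d - 1) / κ ^ d := by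
      field_simp
    rw [e1, e2, e3, e4, hHid, e5]
    conv_lhs => rw [mul_div_assoc']
    conv_rhs => rw [← div_div]
    congr 1
    field_simp [hκd1, hκs0, hκd0, hgr.ne', hgκ.ne', hrs.ne', hrd.ne', hr.ne']
  -- assembly
  filter_upwards [self_mem_nhdsWithin, hEsmall,
    hBL.eventually (eventually_gt_nhds (by linarith : C - ε < C * d * (κ ^ s - 1) / (s * (κ ^ d - 1)))),
    hBU.eventually (eventually_lt_nhds (by linarith :
      C * d * (κ ^ s - 1) / (s * (κ ^ d - 1)) * (κ ^ d / κ ^ s) < C + ε))]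
    with r hr hEr h1 h2
  rw [mem_Ioi] at hr
  have hgr : 0 < g r := hg_pos r hr
  have hsE : 0 < s + r * deriv g r / g r := by
    have := abs_lt.1 hEr; linarith [this.1]
  have hHpos : 0 < s * r ^ (s - 1) * g r + r ^ s * deriv g r := by
    have hrs : (0:ℝ) < r ^ s := Real.rpow_pos_of_pos hr s
    have hid : r * (s * r ^ (s - 1) * g r + r ^ s * deriv g r)
        = (r ^ s * g r) * (s + r * deriv g r / g r) := by
      rw [show r ^ (s-1) = r ^ s / r from by rw [Real.rpow_sub hr, Real.rpow_one]]
      field_simp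
    nlinarith [mul_pos (mul_pos hrs hgr) hsE]
  have hb := hD (r / κ) r (κ * r) (div_pos hr hκ0) (div_lt_self hr hκ1) (by nlinarith)
  have hlow : (f (κ * r) - f r) / ((κ * r) ^ d - r ^ d) * (d * r ^ (d-1)) /
      (s * r ^ (s - 1) * g r + r ^ s * deriv g r) ≤
      D r / (s * r ^ (s - 1) * g r + r ^ s * deriv g r) := by
    gcongr
    exact hb.1
  have hhigh : D r / (s * r ^ (s - 1) * g r + r ^ s * deriv g r) ≤
      (f r - f (r / κ)) / (r ^ d - (r / κ) ^ d) * (d * r ^ (d-1)) /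
      (s * r ^ (s - 1) * g r + r ^ s * deriv g r) := by
    gcongr
    exact hb.2
  rw [Real.dist_eq, abs_lt]
  constructor <;> linarith


theorem kneser_lim_exists_gauge_deriv (f g : ℝ → ℝ) (d s C : ℝ) (hd : 1 ≤ d)
    (hf : IsKneser f d) (hs : 0 < s) (hC : 0 < C)
    (hg_pos : ∀ r : ℝ, 0 < r → 0 < g r) (hg_mono : MonotoneOn g (Set.Ioi 0))
    (hg_diff : ∀ r : ℝ, 0 < r → DifferentiableAt ℝ g r)
    (hg_slow : Filter.Tendsto (fun r : ℝ => r * deriv g r / g r) (𝓝[>] (0 : ℝ)) (𝓝 0))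
    (hlim : Filter.Tendsto (fun r : ℝ => f r / (r ^ s * g r)) (𝓝[>] (0 : ℝ)) (𝓝 C)) :
    Filter.Tendsto
        (fun r : ℝ => derivWithin f (Set.Ioi r) r / (s * r ^ (s - 1) * g r + r ^ s * deriv g r))
        (𝓝[>] (0 : ℝ)) (𝓝 C) ∧
      Filter.Tendsto
        (fun r : ℝ => derivWithin f (Set.Iio r) r / (s * r ^ (s - 1) * g r + r ^ s * deriv g r))
        (𝓝[>] (0 : ℝ)) (𝓝 C) := by
  constructor
  · exact kneser_main_aux f g d s C hd hs hC hg_pos hg_diff hg_slow hlim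
      (fun r => derivWithin f (Set.Ioi r) r)
      (fun t r w ht htr hrw => (kneser_deriv_bounds hd hf ht htr hrw).1)
  · exact kneser_main_aux f g d s C hd hs hC hg_pos hg_diff hg_slow hlim
      (fun r => derivWithin f (Set.Iio r) r)
      (fun t r w ht htr hrw => (kneser_deriv_bounds hd hf ht htr hrw).2)
end

section
/- Define a Kneser function f of order 2 by prescribing f'(x)=2a_i x on (r_{i+1},r_i) where r_i=2^{-i} and a_i=2^{2i}/(i(i+1)), and f(r) = Σ_{j≥i} a_j(r_j²−r_{j+1}²) + ∫_{r_i}^r 2a_i y dy for r∈(r_i,r_{i−1}]. Then f(r_i) = 3/(4i) for all i≥1, and consequently with h(r)=(3 log 2)/(4|log r|) one has lim_{r→0} f(r)/h(r) = 1. -/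
open Filter Set Topology

set_option maxHeartbeats 1000000

/-- `r_i = 2^{-i}`. -/
noncomputable def rseq (i : ℕ) : ℝ := ((2 : ℝ) ^ i)⁻¹

/-- `a_i = 2^{2i} / (i(i+1))`. -/
noncomputable def aseq (i : ℕ) : ℝ := (2 : ℝ) ^ (2 * i) / ((i : ℝ) * ((i : ℝ) + 1))

lemma rseq_pos (i : ℕ) : 0 < rseq i := by
  rw [rseq]; positivity

lemma rseq_anti {i j : ℕ} (h : i ≤ j) : rseq j ≤ rseq i := by
  apply inv_anti₀ (by positivity)
  exact pow_le_pow_right₀ (by norm_num) h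

lemma rseq_succ_lt (i : ℕ) : rseq (i + 1) < rseq i := by
  apply inv_strictAnti₀ (by positivity)
  exact pow_lt_pow_right₀ (by norm_num) (Nat.lt_succ_self i)

lemma rseq_sq (i : ℕ) : rseq i ^ 2 = ((2 : ℝ) ^ (2 * i))⁻¹ := by
  rw [rseq, inv_pow, ← pow_mul, mul_comm i 2]

lemma term_eq {j : ℕ} (hj : 1 ≤ j) :
    aseq j * (rseq j ^ 2 - rseq (j + 1) ^ 2) = 3 / (4 * (j : ℝ)) - 3 / (4 * ((j : ℝ) + 1)) := by
  have hJ : (1 : ℝ) ≤ (j : ℝ) := by exact_mod_cast hj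
  have hJ0 : (j : ℝ) ≠ 0 := by linarith
  have hJ1 : (j : ℝ) + 1 ≠ 0 := by linarith
  have ht : ((2 : ℝ) ^ (2 * j)) ≠ 0 := by positivity
  rw [aseq, rseq_sq, rseq_sq]
  have h2 : (2 : ℝ) ^ (2 * (j + 1)) = (2 : ℝ) ^ (2 * j) * 4 := by
    rw [mul_add, pow_add]; norm_num
  rw [h2]
  field_simp
  ring

lemma sum_hasSum {i : ℕ} (hi : 1 ≤ i) :
    HasSum (fun j : ℕ => if i ≤ j then aseq j * ((rseq j) ^ 2 - (rseq (j + 1)) ^ 2) else 0)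
      (3 / (4 * (i : ℝ))) := by
  set F : ℕ → ℝ := fun j => if i ≤ j then aseq j * ((rseq j) ^ 2 - (rseq (j + 1)) ^ 2) else 0
    with hF
  set d : ℕ → ℝ := fun j => if i ≤ j then 3 / (4 * (j : ℝ)) else 3 / (4 * (i : ℝ)) with hd
  have hFd : ∀ j, F j = d j - d (j + 1) := by
    intro j
    by_cases h : i ≤ j
    · have h' : i ≤ j + 1 := h.trans (Nat.le_succ j)
      simp only [hF, hd, if_pos h, if_pos h']
      rw [term_eq (hi.trans h)]
      push_cast; ring
    · have hji : j + 1 ≤ i := Nat.succ_le_of_lt (Nat.lt_of_not_le h)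
      have hd1 : d (j + 1) = 3 / (4 * (i : ℝ)) := by
        simp only [hd]
        by_cases h' : i ≤ j + 1
        · have hji' : j + 1 = i := le_antisymm hji h'
          rw [if_pos h', hji']
        · rw [if_neg h']
      have hdj : d j = 3 / (4 * (i : ℝ)) := by simp only [hd]; rw [if_neg h]
      simp only [hF, if_neg h, hdj, hd1, sub_self]
  have hF0 : ∀ j, 0 ≤ F j := by
    intro j
    by_cases h : i ≤ j
    · simp only [hF, if_pos h]
      apply mul_nonneg
      · rw [aseq]
        have : (0 : ℝ) < (j : ℝ) := by exact_mod_cast (hi.trans h)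
        positivity
      · have := rseq_anti (Nat.le_succ j)
        have h1 := rseq_pos (j + 1)
        nlinarith
    · simp only [hF, if_neg h]; exact le_rfl
  rw [hasSum_iff_tendsto_nat_of_nonneg hF0]
  have hsum : ∀ n, ∑ j ∈ Finset.range n, F j = d 0 - d n := by
    intro n
    calc ∑ j ∈ Finset.range n, F j = ∑ j ∈ Finset.range n, (d j - d (j + 1)) := by
          exact Finset.sum_congr rfl fun j _ => hFd j
      _ = d 0 - d n := Finset.sum_range_sub' d n
  simp only [hsum]
  have hd0 : d 0 = 3 / (4 * (i : ℝ)) := by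
    simp only [hd]; rw [if_neg (by omega : ¬ i ≤ 0)]
  have hdlim : Tendsto d atTop (𝓝 0) := by
    have h1 : Tendsto (fun n : ℕ => 3 / (4 * (n : ℝ))) atTop (𝓝 0) := by
      have h2 := tendsto_one_div_atTop_nhds_zero_nat.const_mul (3 / 4 : ℝ)
      rw [mul_zero] at h2
      exact h2.congr fun n => by ring
    apply h1.congr'
    filter_upwards [eventually_ge_atTop i] with n hn
    simp only [hd]; rw [if_pos hn]
  have := (tendsto_const_nhds (x := d 0)).sub hdlim
  simpa [hd0] using this

lemma log_rseq (i : ℕ) : Real.log (rseq i) = -((i : ℝ) * Real.log 2) := by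
  rw [rseq, Real.log_inv, Real.log_pow]

theorem kneser_example_value (f : ℝ → ℝ)
    (hf : ∀ i : ℕ, 1 ≤ i → ∀ x : ℝ, rseq (i + 1) < x → x ≤ rseq i →
      f x = (∑' j : ℕ, if i ≤ j then aseq j * ((rseq j) ^ 2 - (rseq (j + 1)) ^ 2) else 0) +
        aseq i * (x ^ 2 - (rseq i) ^ 2)) :
    (∀ i : ℕ, 1 ≤ i → f (rseq i) = 3 / (4 * (i : ℝ))) ∧
      Filter.Tendsto (fun x : ℝ => f x / (3 * Real.log 2 / (4 * |Real.log x|)))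
        (𝓝[>] (0 : ℝ)) (𝓝 1) := by
  have hval : ∀ i : ℕ, 1 ≤ i → f (rseq i) = 3 / (4 * (i : ℝ)) := by
    intro i hi
    rw [hf i hi (rseq i) (rseq_succ_lt i) le_rfl, (sum_hasSum hi).tsum_eq, sub_self,
      mul_zero, add_zero]
  refine ⟨hval, ?_⟩
  rw [Metric.tendsto_nhds]
  intro ε hε
  obtain ⟨N, hN⟩ := exists_nat_one_div_lt hε
  set N' : ℕ := N + 1 with hN'
  have hN'1 : 1 ≤ N' := Nat.le_add_left 1 N
  have hN'ε : 1 / ((N' : ℝ)) < ε := by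
    have : ((N' : ℝ)) = (N : ℝ) + 1 := by push_cast [hN']; ring
    rw [this]; exact hN
  filter_upwards [Ioo_mem_nhdsGT (rseq_pos N')]
    with x hx
  obtain ⟨hx0, hxN⟩ := hx
  -- find the index i with rseq (i+1) < x ≤ rseq i
  have hex : ∃ j, rseq j < x := by
    obtain ⟨n, hn⟩ := pow_unbounded_of_one_lt x⁻¹ (by norm_num : (1:ℝ) < 2)
    refine ⟨n, ?_⟩
    rw [rseq]
    exact inv_lt_of_inv_lt₀ hx0 hn
  have hkspec : rseq (Nat.find hex) < x := Nat.find_spec hex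
  have hkN : N' < Nat.find hex := by
    by_contra h
    push_neg at h
    exact absurd (lt_of_lt_of_le hxN (rseq_anti h)) (not_lt.mpr hkspec.le)
  obtain ⟨i, hki⟩ : ∃ i, Nat.find hex = i + 1 := ⟨Nat.find hex - 1, by omega⟩
  have hiN : N' ≤ i := by omega
  have hi1 : 1 ≤ i := le_trans hN'1 hiN
  have hxi : x ≤ rseq i := le_of_not_gt (Nat.find_min hex (by omega))
  have hxi1 : rseq (i + 1) < x := hki ▸ hkspec
  set I : ℝ := (i : ℝ) with hI
  have hI1 : (1 : ℝ) ≤ I := by rw [hI]; exact_mod_cast hi1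
  have hIN : (N' : ℝ) ≤ I := by rw [hI]; exact_mod_cast hiN
  have hI0 : (0 : ℝ) < I := by linarith
  -- value of f x
  have hfx : f x = 3 / (4 * I) + aseq i * (x ^ 2 - rseq i ^ 2) := by
    rw [hf i hi1 x hxi1 hxi, (sum_hasSum hi1).tsum_eq]
  have haseq_pos : 0 < aseq i := by
    rw [aseq]; positivity
  -- bounds on f x
  have hfub : f x ≤ 3 / (4 * I) := by
    rw [hfx]
    have hxp := hx0
    have hxsq : x ^ 2 ≤ rseq i ^ 2 := by nlinarith [rseq_pos i]
    nlinarith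
  have hterm := term_eq hi1
  have hflb : 3 / (4 * (I + 1)) < f x := by
    rw [hfx]
    have hr1 := rseq_pos (i + 1)
    have hxsq : rseq (i + 1) ^ 2 < x ^ 2 := by nlinarith
    have h1 : aseq i * (rseq (i+1) ^ 2 - rseq i ^ 2) < aseq i * (x ^ 2 - rseq i ^ 2) := by
      apply mul_lt_mul_of_pos_left _ haseq_pos
      linarith
    have h2 : aseq i * (rseq (i+1) ^ 2 - rseq i ^ 2)
        = -(3 / (4 * I) - 3 / (4 * (I + 1))) := by
      rw [← neg_sub (rseq i ^ 2), mul_neg, hterm]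
    rw [h2] at h1
    linarith
  -- bounds on h x
  have hlog2 : (0 : ℝ) < Real.log 2 := Real.log_pos (by norm_num)
  have hlogxi : Real.log x ≤ -(I * Real.log 2) := by
    rw [← log_rseq i]
    exact Real.log_le_log hx0 hxi
  have hlogxi1 : -((I + 1) * Real.log 2) < Real.log x := by
    have := Real.log_lt_log (rseq_pos (i+1)) hxi1
    rw [log_rseq (i+1)] at this
    push_cast at this
    convert this using 3
  have hlabs : |Real.log x| = -Real.log x := by
    apply abs_of_nonpos
    have : (0:ℝ) < I * Real.log 2 := by positivity
    linarith
  set L : ℝ := |Real.log x| with hL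
  have hLlb : I * Real.log 2 ≤ L := by rw [hlabs]; linarith
  have hLub : L < (I + 1) * Real.log 2 := by rw [hlabs]; linarith
  have hL0 : 0 < L := lt_of_lt_of_le (by positivity) hLlb
  set B : ℝ := 3 * Real.log 2 / (4 * L) with hB
  have hB0 : 0 < B := by rw [hB]; positivity
  have hBub : B ≤ 3 / (4 * I) := by
    rw [hB, div_le_div_iff₀ (by positivity) (by positivity)]
    nlinarith
  have hBlb : 3 / (4 * (I + 1)) < B := by
    rw [hB, div_lt_div_iff₀ (by positivity) (by positivity)]
    nlinarith
  -- ratio bounds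
  have hf0 : 0 < f x := lt_trans (by positivity) hflb
  have hub : f x / B ≤ (I + 1) / I := by
    have h1 : f x / B ≤ (3 / (4 * I)) / (3 / (4 * (I + 1))) :=
      div_le_div₀ (by positivity) hfub (by positivity) hBlb.le
    have h2 : (3 / (4 * I)) / (3 / (4 * (I + 1))) = (I + 1) / I := by
      field_simp
    linarith [h2 ▸ h1]
  have hlb : I / (I + 1) ≤ f x / B := by
    have h1 : (3 / (4 * (I + 1))) / (3 / (4 * I)) ≤ f x / B :=
      div_le_div₀ (by positivity) hflb.le hB0 hBub
    have h2 : (3 / (4 * (I + 1))) / (3 / (4 * I)) = I / (I + 1) := by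
      field_simp
    linarith [h2 ▸ h1]
  -- conclude
  have hIinv : 1 / I < ε := by
    have h1 : 1 / I ≤ 1 / (N' : ℝ) := by
      apply one_div_le_one_div_of_le _ hIN
      have : (1:ℝ) ≤ (N' : ℝ) := by exact_mod_cast hN'1
      linarith
    linarith
  have e1 : (I + 1) / I = 1 + 1 / I := by field_simp
  have e2 : I / (I + 1) = 1 - 1 / (I + 1) := by field_simp; ring
  have e3 : 1 / (I + 1) ≤ 1 / I := by
    apply one_div_le_one_div_of_le hI0; linarith
  rw [Real.dist_eq, abs_sub_lt_iff]
  constructor <;> [skip; skip] <;> rw [e1] at hub <;> rw [e2] at hlb <;> linarith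
end
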